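/- Suppose h : ℝ² → ℝ is continuous and ∫₀^{2π} h(cos s, sin s) ds = 0, and h(r cos θ, r sin θ) = h(cos θ, sin θ) for all r > 0. Then every solution of x' = −y, y' = x, z' = h(x, y) with initial condition (x₀, y₀, z₀) satisfying x₀² + y₀² ≠ 0 is periodic with period 2π. -/

import Mathlib

open Real

lemma const_of_deriv_zero (f : ℝ → ℝ) (hf : ∀ t, HasDerivAt f 0 t) (t : ℝ) : f t = f 0 := by
  apply is_const_of_deriv_eq_zero (fun u => (hf u).differentiableAt)
  intro u; exact (hf u).deriv

/-- under H1 (zero mean on the circle) and H2, every solution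
off the z-axis is 2π-periodic. -/
theorem cylinders_periodic
    (h : ℝ × ℝ → ℝ) (hh : Continuous h)
    (hmean : (∫ s in (0:ℝ)..(2 * π), h (Real.cos s, Real.sin s)) = 0)
    (H2 : ∀ r θ : ℝ, 0 < r →
      h (r * Real.cos θ, r * Real.sin θ) = h (Real.cos θ, Real.sin θ))
    (x y z : ℝ → ℝ) (x₀ y₀ z₀ : ℝ)
    (hx : ∀ t, HasDerivAt x (-(y t)) t)
    (hy : ∀ t, HasDerivAt y (x t) t)
    (hz : ∀ t, HasDerivAt z (h (x t, y t)) t)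
    (hx0 : x 0 = x₀) (hy0 : y 0 = y₀) (hz0 : z 0 = z₀)
    (hnz : x₀ ^ 2 + y₀ ^ 2 ≠ 0) :
    ∀ t, x (t + 2 * π) = x t ∧ y (t + 2 * π) = y t ∧ z (t + 2 * π) = z t := by
  -- constants of motion a = x cos + y sin, b = y cos - x sin
  have ha : ∀ t, x t * Real.cos t + y t * Real.sin t = x₀ := by
    intro t
    have := const_of_deriv_zero (fun t => x t * Real.cos t + y t * Real.sin t)
      (fun t => by
        have h1 := ((hx t).mul (Real.hasDerivAt_cos t)).add
          ((hy t).mul (Real.hasDerivAt_sin t))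
        exact h1.congr_deriv (by ring)) t
    simpa [hx0, hy0] using this
  have hb : ∀ t, y t * Real.cos t - x t * Real.sin t = y₀ := by
    intro t
    have := const_of_deriv_zero (fun t => y t * Real.cos t - x t * Real.sin t)
      (fun t => by
        have h1 := ((hy t).mul (Real.hasDerivAt_cos t)).sub
          ((hx t).mul (Real.hasDerivAt_sin t))
        exact h1.congr_deriv (by ring)) t
    simpa [hx0, hy0] using this
  -- explicit formulas
  have hxf : ∀ t, x t = x₀ * Real.cos t - y₀ * Real.sin t := by
    intro t
    have h1 := ha t; have h2 := hb t
    have hsc := Real.sin_sq_add_cos_sq t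
    linear_combination Real.cos t * h1 - Real.sin t * h2 - x t * hsc
  have hyf : ∀ t, y t = x₀ * Real.sin t + y₀ * Real.cos t := by
    intro t
    have h1 := ha t; have h2 := hb t
    have hsc := Real.sin_sq_add_cos_sq t
    linear_combination Real.sin t * h1 + Real.cos t * h2 - y t * hsc
  have hxp : ∀ t, x (t + 2 * π) = x t := by
    intro t; rw [hxf, hxf, Real.cos_add_two_pi, Real.sin_add_two_pi]
  have hyp : ∀ t, y (t + 2 * π) = y t := by
    intro t; rw [hyf, hyf, Real.cos_add_two_pi, Real.sin_add_two_pi]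
  -- polar form of initial condition
  set c : ℂ := ⟨x₀, y₀⟩ with hc
  have hc0 : c ≠ 0 := by
    intro hc0
    apply hnz
    have h1 : x₀ = 0 := congrArg Complex.re hc0
    have h2 : y₀ = 0 := congrArg Complex.im hc0
    simp [h1, h2]
  set r : ℝ := ‖c‖ with hr
  set φ : ℝ := Complex.arg c with hφ
  have hrpos : 0 < r := by simpa [hr] using (norm_pos_iff.mpr hc0)
  have hcosφ : x₀ = r * Real.cos φ := by
    have h1 : Real.cos φ = x₀ / r := by
      simpa [hc, hφ, hr] using Complex.cos_arg hc0
    rw [h1]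
    field_simp
  have hsinφ : y₀ = r * Real.sin φ := by
    have h1 : Real.sin φ = y₀ / r := by
      simpa [hc, hφ, hr] using Complex.sin_arg c
    rw [h1]
    field_simp
  -- values of h along the orbit
  have hval : ∀ s : ℝ, h (x s, y s) = h (Real.cos (s + φ), Real.sin (s + φ)) := by
    intro s
    have hx' : x s = r * Real.cos (s + φ) := by
      rw [hxf, hcosφ, hsinφ, Real.cos_add]; ring
    have hy' : y s = r * Real.sin (s + φ) := by
      rw [hyf, hsinφ, hcosφ, Real.sin_add]; ring
    rw [hx', hy', H2 r (s + φ) hrpos]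
  -- the integral over one period vanishes
  have hcont : Continuous fun s : ℝ => h (Real.cos s, Real.sin s) :=
    hh.comp (Real.continuous_cos.prodMk Real.continuous_sin)
  have hper : Function.Periodic (fun s : ℝ => h (Real.cos s, Real.sin s)) (2 * π) := by
    intro s; simp [Real.cos_add_two_pi, Real.sin_add_two_pi]
  have hxcont : Continuous x :=
    (Differentiable.continuous fun t => (hx t).differentiableAt)
  have hycont : Continuous y :=
    (Differentiable.continuous fun t => (hy t).differentiableAt)
  have horb : Continuous fun s : ℝ => h (x s, y s) :=
    hh.comp (hxcont.prodMk hycont)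
  -- FTC: z 2π - z 0 = ∫ over one period = 0
  have hz2π : z (2 * π) - z 0 = 0 := by
    have hFTC : (∫ s in (0:ℝ)..(2 * π), h (x s, y s)) = z (2 * π) - z 0 :=
      intervalIntegral.integral_eq_sub_of_hasDerivAt
        (fun s _ => hz s) (horb.intervalIntegrable 0 (2 * π))
    rw [← hFTC]
    calc (∫ s in (0:ℝ)..(2 * π), h (x s, y s))
        = ∫ s in (0:ℝ)..(2 * π), h (Real.cos (s + φ), Real.sin (s + φ)) := by
          apply intervalIntegral.integral_congr
          intro s _; exact hval s
      _ = ∫ u in (0 + φ)..(2 * π + φ), h (Real.cos u, Real.sin u) :=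
          intervalIntegral.integral_comp_add_right (fun u => h (Real.cos u, Real.sin u)) φ
      _ = ∫ u in φ..(φ + 2 * π), h (Real.cos u, Real.sin u) := by
          rw [zero_add, add_comm (2 * π) φ]
      _ = ∫ u in (0:ℝ)..(0 + 2 * π), h (Real.cos u, Real.sin u) :=
          hper.intervalIntegral_add_eq φ 0
      _ = 0 := by rw [zero_add]; exact hmean
  -- z is periodic
  have hzp : ∀ t, z (t + 2 * π) = z t := by
    intro t
    have hg : ∀ s, HasDerivAt (fun u => z (u + 2 * π) - z u) 0 s := by
      intro s
      have h1 : HasDerivAt (fun u => z (u + 2 * π)) (h (x (s + 2 * π), y (s + 2 * π))) s := by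
        have := (hz (s + 2 * π)).comp s ((hasDerivAt_id s).add_const (2 * π))
        simpa [Function.comp_def] using this
      have h2 := (h1.sub (hz s))
      have : h (x (s + 2 * π), y (s + 2 * π)) - h (x s, y s) = 0 := by
        rw [hxp, hyp, sub_self]
      rwa [this] at h2
    have := const_of_deriv_zero (fun u => z (u + 2 * π) - z u) hg t
    simp only [zero_add] at this
    have hz0' : z (2 * π) - z 0 = 0 := hz2π
    have : z (t + 2 * π) - z t = 0 := by rw [this, hz0']
    linarith
  intro t
  exact ⟨hxp t, hyp t, hzp t⟩
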